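/- Assume M is geodesic and let x = ((t_i,a_i,b_i))_{i=1}^n and x̂ = ((t̂_i,â_i,b̂_i))_{i=1}^n be dial-a-ride request sequences of the same length n. Then |Z_D(x) − Z_D(x̂)| ≤ ε_time + 2·ε_pos. (Combined content of the paper's two dial-a-ride lemmas underlying the Theorem that the LADAR-Trust algorithm has competitive ratio 1 + (2 ε_time + 4 ε_pos)/Z^OPT.) -/

import Mathlib

/-- Feasibility of a pair `(σ, T)` for the dial-a-ride request sequence `x`: the schedule
is 1-Lipschitz, stays at the origin at all times `≤ 0`, ends at the origin at time `T`,
and for each request visits its pickup position (no earlier than its release time) and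
afterwards its delivery position (uncapacitated server). -/
def FeasibleD {M : Type*} [MetricSpace M] (o : M) {n : ℕ} (x : Fin n → ℝ × M × M)
    (σ : ℝ → M) (T : ℝ) : Prop :=
  (LipschitzWith 1 σ ∧ ∀ s : ℝ, s ≤ 0 → σ s = o) ∧ 0 ≤ T ∧ σ T = o ∧
    ∀ i : Fin n, ∃ s u : ℝ, (x i).1 ≤ s ∧ s ≤ u ∧ u ≤ T ∧
      σ s = (x i).2.1 ∧ σ u = (x i).2.2

/-- The optimal offline completion time of the dial-a-ride request sequence `x`. -/
noncomputable def ZD {M : Type*} [MetricSpace M] (o : M) {n : ℕ}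
    (x : Fin n → ℝ × M × M) : ℝ :=
  sInf {T : ℝ | ∃ σ : ℝ → M, FeasibleD o x σ T}

/-- The optimal length of a closed dial-a-ride tour for `x`, ignoring release times. -/
noncomputable def LD {M : Type*} [MetricSpace M] (o : M) {n : ℕ}
    (x : Fin n → ℝ × M × M) : ℝ :=
  sInf {S : ℝ | 0 ≤ S ∧ ∃ γ : ℝ → M, LipschitzWith 1 γ ∧ γ 0 = o ∧ γ S = o ∧
    ∀ i : Fin n, ∃ s u : ℝ, 0 ≤ s ∧ s ≤ u ∧ u ≤ S ∧
      γ s = (x i).2.1 ∧ γ u = (x i).2.2}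

/-- `M` is geodesic: any two points are joined by a unit-speed geodesic. -/
def IsGeodesicSpace (M : Type*) [MetricSpace M] : Prop :=
  ∀ a b : M, ∃ γ : ℝ → M, LipschitzWith 1 γ ∧ γ 0 = a ∧ γ (dist a b) = b

section Aux
variable {M : Type*} [MetricSpace M]

lemma glue_lip {f g : ℝ → M} (c : ℝ) (hf : LipschitzWith 1 f) (hg : LipschitzWith 1 g)
    (hfg : f c = g c) : LipschitzWith 1 (fun t => if t ≤ c then f t else g t) := by
  rw [lipschitzWith_iff_dist_le_mul] at hf hg ⊢
  have key : ∀ x y : ℝ, x ≤ y →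
      dist (if x ≤ c then f x else g x) (if y ≤ c then f y else g y) ≤ 1 * dist x y := by
    intro x y hxy
    by_cases hx : x ≤ c <;> by_cases hy : y ≤ c <;>
      simp only [hx, hy, if_true, if_false]
    · exact hf x y
    · calc dist (f x) (g y) ≤ dist (f x) (f c) + dist (f c) (g y) := dist_triangle _ _ _
        _ = dist (f x) (f c) + dist (g c) (g y) := by rw [hfg]
        _ ≤ 1 * dist x c + 1 * dist c y := add_le_add (hf x c) (hg c y)
        _ ≤ 1 * dist x y := by
            rw [Real.dist_eq, Real.dist_eq, Real.dist_eq]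
            rw [abs_of_nonpos (by linarith), abs_of_nonpos (by push_neg at hy; linarith),
              abs_of_nonpos (by linarith)]
            linarith
    · exact absurd (hxy.trans hy) hx
    · exact hg x y
  intro x y
  rcases le_total x y with h | h
  · exact key x y h
  · rw [dist_comm, dist_comm x y]; exact key y x h

lemma insert_detour (hgeo : IsGeodesicSpace M) {σ : ℝ → M} (hσ : LipschitzWith 1 σ)
    (s0 : ℝ) (c : M) :
    ∃ σ' : ℝ → M, ∃ ψ : ℝ → ℝ,
      LipschitzWith 1 σ' ∧
      (∀ t, t ≤ s0 → σ' t = σ t) ∧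
      σ' (s0 + dist (σ s0) c) = c ∧
      (∀ t, s0 + 2 * dist (σ s0) c ≤ t → σ' t = σ (t - 2 * dist (σ s0) c)) ∧
      Monotone ψ ∧ (∀ t, t ≤ ψ t) ∧ (∀ t, ψ t ≤ t + 2 * dist (σ s0) c) ∧
      (∀ t, σ' (ψ t) = σ t) ∧ (∀ t, s0 ≤ t → ψ t = t + 2 * dist (σ s0) c) := by
  set d := dist (σ s0) c with hd_def
  have hd : 0 ≤ d := dist_nonneg
  obtain ⟨γ, hγ, hγ0, hγd⟩ := hgeo (σ s0) c
  set δ : ℝ → M := fun t => γ (d - |t - s0 - d|) with hδ_def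
  have hδlip : LipschitzWith 1 δ := by
    have h1 : LipschitzWith 1 (fun t : ℝ => d - |t - s0 - d|) := by
      rw [lipschitzWith_iff_dist_le_mul]
      intro a b
      rw [Real.dist_eq, Real.dist_eq]
      have : (d - |a - s0 - d|) - (d - |b - s0 - d|) = |b - s0 - d| - |a - s0 - d| := by ring
      rw [this]
      calc |_| ≤ |(b - s0 - d) - (a - s0 - d)| := abs_abs_sub_abs_le_abs_sub _ _
        _ = 1 * |a - b| := by rw [abs_sub_comm]; ring_nf
    have := hγ.comp h1; rw [mul_one] at this; exact this
  have hδ0 : δ s0 = σ s0 := by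
    simp only [hδ_def]
    rw [show s0 - s0 - d = -d by ring, abs_neg, abs_of_nonneg hd, sub_self, hγ0]
  have hδend : δ (s0 + 2 * d) = σ s0 := by
    simp only [hδ_def]
    rw [show s0 + 2 * d - s0 - d = d by ring, abs_of_nonneg hd, sub_self, hγ0]
  set σ' : ℝ → M := fun t => if t ≤ s0 then σ t else if t ≤ s0 + 2 * d then δ t
    else σ (t - 2 * d) with hσ'_def
  have hlip2 : LipschitzWith 1 (fun t : ℝ => σ (t - 2 * d)) := by
    have h1 : LipschitzWith 1 (fun t : ℝ => t - 2 * d) := by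
      rw [lipschitzWith_iff_dist_le_mul]
      intro a b
      rw [Real.dist_eq, Real.dist_eq]
      simp only [NNReal.coe_one, one_mul]
      apply le_of_eq; congr 1; ring
    have := hσ.comp h1; rw [mul_one] at this; exact this
  have hσ'lip : LipschitzWith 1 σ' := by
    apply glue_lip s0 hσ (glue_lip (s0 + 2 * d) hδlip hlip2 (by
      simp only [hδend]; congr 1; ring))
    rw [if_pos (by linarith : s0 ≤ s0 + 2 * d), hδ0]
  have hpre : ∀ t, t ≤ s0 → σ' t = σ t := fun t ht => if_pos ht
  have hmid : σ' (s0 + d) = c := by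
    rcases eq_or_lt_of_le hd with h0 | h0
    · have hc : σ s0 = c := dist_eq_zero.mp (by rw [← hd_def, ← h0])
      have h1 : σ' (s0 + d) = σ (s0 + d) := hpre _ (by linarith)
      rw [h1, ← h0, add_zero]; exact hc
    · simp only [hσ'_def]
      rw [if_neg (by linarith), if_pos (by linarith)]
      simp only [hδ_def]
      rw [show s0 + d - s0 - d = 0 by ring, abs_zero, sub_zero, hγd]
  have hpost : ∀ t, s0 + 2 * d ≤ t → σ' t = σ (t - 2 * d) := by
    intro t ht
    by_cases ht1 : t ≤ s0
    · have h0 : d = 0 := le_antisymm (by linarith) hd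
      rw [hpre t ht1, h0]; norm_num
    · by_cases ht2 : t ≤ s0 + 2 * d
      · have : t = s0 + 2 * d := le_antisymm ht2 ht
        simp only [hσ'_def]
        rw [if_neg ht1, if_pos ht2, this, hδend]
        congr 1; ring
      · simp only [hσ'_def]
        rw [if_neg ht1, if_neg ht2]
  set ψ : ℝ → ℝ := fun t => if t < s0 then t else t + 2 * d with hψ_def
  refine ⟨σ', ψ, hσ'lip, hpre, hmid, hpost, ?_, ?_, ?_, ?_, ?_⟩
  · intro a b hab
    simp only [hψ_def]
    by_cases ha : a < s0
    · by_cases hb : b < s0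
      · simp [ha, hb, hab]
      · simp only [ha, hb, if_true, if_false]; linarith
    · have hb : ¬ b < s0 := fun h => ha (lt_of_le_of_lt hab h)
      simp only [ha, hb, if_false]; linarith
  · intro t; simp only [hψ_def]; split <;> linarith
  · intro t; simp only [hψ_def]; split <;> linarith
  · intro t
    by_cases ht : t < s0
    · simp only [hψ_def, if_pos ht]; exact hpre t ht.le
    · simp only [hψ_def, if_neg ht]
      push_neg at ht
      rw [hpost (t + 2 * d) (by linarith)]
      congr 1; ring
  · intro t ht; simp only [hψ_def, if_neg (not_lt.mpr ht)]

lemma shift_feasible {o : M} {n : ℕ} {x : Fin n → ℝ × M × M} {σ : ℝ → M} {T : ℝ}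
    (h : FeasibleD o x σ T) (t' : Fin n → ℝ) (ε : ℝ) (hε0 : 0 ≤ ε)
    (hε : ∀ i, t' i ≤ (x i).1 + ε) :
    FeasibleD o (fun i => (t' i, (x i).2)) (fun t => σ (t - ε)) (T + ε) := by
  obtain ⟨⟨hlip, h0⟩, hT0, hTo, hreq⟩ := h
  have hsub : LipschitzWith 1 (fun t : ℝ => t - ε) := by
    rw [lipschitzWith_iff_dist_le_mul]
    intro a b
    rw [Real.dist_eq, Real.dist_eq]
    simp only [NNReal.coe_one, one_mul]
    apply le_of_eq; congr 1; ring
  refine ⟨⟨by have := hlip.comp hsub; rw [mul_one] at this; exact this, fun s hs => h0 _ (by linarith)⟩,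
    by linarith, by simpa using hTo, ?_⟩
  intro i
  obtain ⟨s, u, h1, h2, h3, h4, h5⟩ := hreq i
  exact ⟨s + ε, u + ε, by simpa using by linarith [hε i], by linarith, by linarith,
    by simpa using h4, by simpa using h5⟩

lemma replace_one (hgeo : IsGeodesicSpace M) {o : M} {n : ℕ} {x : Fin n → ℝ × M × M}
    {σ : ℝ → M} {T : ℝ} (h : FeasibleD o x σ T) (j : Fin n) (hj : 0 ≤ (x j).1)
    (a' b' : M) :
    ∃ σ' T', FeasibleD o (Function.update x j ((x j).1, a', b')) σ' T' ∧
      T' ≤ T + 2 * (dist (x j).2.1 a' + dist (x j).2.2 b') := by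
  obtain ⟨⟨hlip, h0⟩, hT0, hTo, hreq⟩ := h
  obtain ⟨s, u, hts, hsu, huT, hsa, hub⟩ := hreq j
  have hs0 : 0 ≤ s := le_trans hj hts
  obtain ⟨σ1, ψ1, hlip1, hpre1, hmid1, hpost1, hmono1, hle1, hub1, hψσ1, hψeq1⟩ :=
    insert_detour hgeo hlip s a'
  set d1 := dist (σ s) a' with hd1_def
  have hd1 : 0 ≤ d1 := dist_nonneg
  have hσ1u : σ1 (u + 2 * d1) = (x j).2.2 := by
    rw [hpost1 _ (by linarith)]
    rw [show u + 2 * d1 - 2 * d1 = u by ring, hub]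
  obtain ⟨σ2, ψ2, hlip2, hpre2, hmid2, hpost2, hmono2, hle2, hub2, hψσ2, hψeq2⟩ :=
    insert_detour hgeo hlip1 (u + 2 * d1) b'
  set d2 := dist (σ1 (u + 2 * d1)) b' with hd2_def
  have hd2 : 0 ≤ d2 := dist_nonneg
  have hd1eq : d1 = dist (x j).2.1 a' := by rw [hd1_def, hsa]
  have hd2eq : d2 = dist (x j).2.2 b' := by rw [hd2_def, hσ1u]
  refine ⟨σ2, T + 2 * d1 + 2 * d2, ⟨⟨hlip2, ?_⟩, by linarith, ?_, ?_⟩, by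
    rw [hd1eq, hd2eq]; linarith⟩
  · intro t ht
    rw [hpre2 t (by linarith), hpre1 t (by linarith)]
    exact h0 t ht
  · rw [hpost2 _ (by linarith)]
    rw [show T + 2 * d1 + 2 * d2 - 2 * d2 = T + 2 * d1 by ring]
    rw [hpost1 _ (by linarith)]
    rw [show T + 2 * d1 - 2 * d1 = T by ring]
    exact hTo
  · intro i
    by_cases hij : i = j
    · subst hij
      refine ⟨s + d1, u + 2 * d1 + d2, ?_, by linarith, by linarith, ?_, ?_⟩
      · rw [Function.update_self]; simpa using hts.trans (by linarith)
      · rw [Function.update_self]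
        rw [hpre2 _ (by linarith)]
        simpa using hmid1
      · rw [Function.update_self]
        simpa using hmid2
    · obtain ⟨si, ui, h1, h2, h3, h4, h5⟩ := hreq i
      refine ⟨ψ2 (ψ1 si), ψ2 (ψ1 ui), ?_, ?_, ?_, ?_, ?_⟩
      · rw [Function.update_of_ne hij]
        exact h1.trans ((hle1 si).trans (hle2 _))
      · exact hmono2 (hmono1 h2)
      · calc ψ2 (ψ1 ui) ≤ ψ1 ui + 2 * d2 := hub2 _
          _ ≤ ui + 2 * d1 + 2 * d2 := by linarith [hub1 ui]
          _ ≤ T + 2 * d1 + 2 * d2 := by linarith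
      · rw [Function.update_of_ne hij, hψσ2, hψσ1]; exact h4
      · rw [Function.update_of_ne hij, hψσ2, hψσ1]; exact h5

lemma lift_pos (hgeo : IsGeodesicSpace M) {o : M} {n : ℕ} {x : Fin n → ℝ × M × M}
    (hx : ∀ i, 0 ≤ (x i).1) {σ : ℝ → M} {T : ℝ} (h : FeasibleD o x σ T)
    (p : Fin n → M × M) :
    ∃ σ' T', FeasibleD o (fun i => ((x i).1, p i)) σ' T' ∧
      T' ≤ T + 2 * ∑ i, (dist (x i).2.1 (p i).1 + dist (x i).2.2 (p i).2) := by
  suffices H : ∀ S : Finset (Fin n), ∃ σ' T',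
      FeasibleD o (fun i => if i ∈ S then ((x i).1, p i) else x i) σ' T' ∧
      T' ≤ T + 2 * ∑ i ∈ S, (dist (x i).2.1 (p i).1 + dist (x i).2.2 (p i).2) by
    obtain ⟨σ', T', h1, h2⟩ := H Finset.univ
    simp only [Finset.mem_univ, if_true] at h1
    exact ⟨σ', T', h1, h2⟩
  intro S
  induction S using Finset.induction_on with
  | empty =>
    refine ⟨σ, T, ?_, by simp⟩
    simpa using h
  | @insert j S hjS IH =>
    obtain ⟨σ', T', h1, h2⟩ := IH
    have hyj : (fun i => if i ∈ S then ((x i).1, p i) else x i) j = x j := by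
      simp [hjS]
    obtain ⟨σ'', T'', h3, h4⟩ := replace_one hgeo h1 j
      (by simp only [hjS, if_false]; exact hx j) (p j).1 (p j).2
    have hfun : Function.update (fun i => if i ∈ S then ((x i).1, p i) else x i) j
        (((fun i => if i ∈ S then ((x i).1, p i) else x i) j).1, (p j).1, (p j).2)
        = fun i => if i ∈ insert j S then ((x i).1, p i) else x i := by
      funext i
      by_cases hij : i = j
      · subst hij
        rw [Function.update_self]
        simp [hjS]
      · rw [Function.update_of_ne hij]
        simp [Finset.mem_insert, hij]
    rw [hfun] at h3
    refine ⟨σ'', T'', h3, ?_⟩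
    rw [Finset.sum_insert hjS]
    simp only [hjS, if_false] at h4
    linarith
end Aux

section Main
variable {M : Type*} [MetricSpace M]

lemma ZD_bddBelow (o : M) {n : ℕ} (x : Fin n → ℝ × M × M) :
    BddBelow {T : ℝ | ∃ σ : ℝ → M, FeasibleD o x σ T} :=
  ⟨0, fun _ ⟨_, h⟩ => h.2.1⟩

lemma exists_feasible (hgeo : IsGeodesicSpace M) (o : M) {n : ℕ}
    (x : Fin n → ℝ × M × M) (hx : ∀ i, 0 ≤ (x i).1) :
    {T : ℝ | ∃ σ : ℝ → M, FeasibleD o x σ T}.Nonempty := by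
  set T0 : ℝ := ∑ i, (x i).1 with hT0_def
  have hbase : FeasibleD o (fun i => ((x i).1, o, o)) (fun _ => o) T0 := by
    refine ⟨⟨(LipschitzWith.const o).weaken zero_le_one, fun _ _ => rfl⟩,
      Finset.sum_nonneg (fun i _ => hx i), rfl, ?_⟩
    intro i
    exact ⟨T0, T0, Finset.single_le_sum (fun i _ => hx i) (Finset.mem_univ i),
      le_refl _, le_refl _, rfl, rfl⟩
  obtain ⟨σ', T', h1, _⟩ := lift_pos (x := fun i => ((x i).1, o, o)) hgeo (fun i => hx i) hbase (fun i => (x i).2)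
  have hxeq : (fun i => (((fun i => ((x i).1, o, o)) i).1, (x i).2)) = x := by
    funext i; simp
  rw [hxeq] at h1
  exact ⟨T', σ', h1⟩

lemma ZD_le_aux (hgeo : IsGeodesicSpace M) (o : M) {n : ℕ}
    (x xh : Fin n → ℝ × M × M) (hx : ∀ i, 0 ≤ (x i).1) (hxh : ∀ i, 0 ≤ (xh i).1)
    (ε : ℝ) (hε0 : 0 ≤ ε) (hε : ∀ i, (xh i).1 ≤ (x i).1 + ε) :
    ZD o xh ≤ ZD o x +
      (ε + 2 * ∑ i, (dist (xh i).2.1 (x i).2.1 + dist (xh i).2.2 (x i).2.2)) := by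
  set D : ℝ := ∑ i, (dist (xh i).2.1 (x i).2.1 + dist (xh i).2.2 (x i).2.2) with hD_def
  have hub : ∀ T ∈ {T : ℝ | ∃ σ : ℝ → M, FeasibleD o x σ T},
      ZD o xh ≤ T + (ε + 2 * D) := by
    rintro T ⟨σ, hfeas⟩
    have h1 := shift_feasible hfeas (fun i => (xh i).1) ε hε0 hε
    obtain ⟨σ', T', h2, h3⟩ := lift_pos (x := fun i => ((xh i).1, (x i).2)) hgeo (fun i => hxh i) h1 (fun i => (xh i).2)
    have h2' : FeasibleD o xh σ' T' := by
      have hxeq : (fun i => (((fun i => ((xh i).1, (x i).2)) i).1, (xh i).2)) = xh := by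
        funext i; simp
      rwa [hxeq] at h2
    have hZ : ZD o xh ≤ T' := csInf_le (ZD_bddBelow o xh) ⟨σ', h2'⟩
    have hsum : ∑ i, (dist ((fun i => ((xh i).1, (x i).2)) i).2.1 ((fun i => (xh i).2) i).1
        + dist ((fun i => ((xh i).1, (x i).2)) i).2.2 ((fun i => (xh i).2) i).2) = D := by
      rw [hD_def]
      exact Finset.sum_congr rfl (fun i _ => by simp [dist_comm])
    rw [hsum] at h3
    linarith
  have hne := exists_feasible hgeo o x hx
  have hfinal : ZD o xh - (ε + 2 * D) ≤ ZD o x :=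
    le_csInf hne (fun T hT => by linarith [hub T hT])
  linarith

end Main


/-- The optimal offline dial-a-ride completion times of the actual and the predicted
instance differ by at most `ε_time + 2 ε_pos`. -/
theorem darp_abs_Z_sub_Z_le {M : Type*} [MetricSpace M] (o : M)
    (hgeo : IsGeodesicSpace M) {n : ℕ}
    (x xh : Fin n → ℝ × M × M) (hx : ∀ i, 0 ≤ (x i).1) (hxh : ∀ i, 0 ≤ (xh i).1) :
    |ZD o x - ZD o xh| ≤ (⨆ i, |(xh i).1 - (x i).1|) +
      2 * ∑ i, (dist (xh i).2.1 (x i).2.1 + dist (xh i).2.2 (x i).2.2) := by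
  set ε : ℝ := ⨆ i, |(xh i).1 - (x i).1| with hε_def
  set D : ℝ := ∑ i, (dist (xh i).2.1 (x i).2.1 + dist (xh i).2.2 (x i).2.2) with hD_def
  have hB : ∀ i, |(xh i).1 - (x i).1| ≤ ε := fun i => by
    rw [hε_def]
    exact le_ciSup (f := fun i => |(xh i).1 - (x i).1|) (Set.Finite.bddAbove (Set.finite_range _)) i
  have hε0 : 0 ≤ ε := by
    rcases isEmpty_or_nonempty (Fin n) with h | h
    · rw [hε_def, Real.iSup_of_isEmpty]
    · exact le_trans (abs_nonneg _) (hB h.some)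
  have hε1 : ∀ i, (xh i).1 ≤ (x i).1 + ε := fun i => by
    have h1 := (abs_le.mp (hB i)).2; linarith
  have hε2 : ∀ i, (x i).1 ≤ (xh i).1 + ε := fun i => by
    have h1 := (abs_le.mp (hB i)).1; linarith
  have hA := ZD_le_aux hgeo o x xh hx hxh ε hε0 hε1
  have hB2 := ZD_le_aux hgeo o xh x hxh hx ε hε0 hε2
  have hsum : ∑ i, (dist ((x i)).2.1 ((xh i)).2.1 + dist ((x i)).2.2 ((xh i)).2.2) = D := by
    rw [hD_def]
    exact Finset.sum_congr rfl (fun i _ => by simp [dist_comm])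
  rw [hsum] at hB2
  rw [abs_le]
  constructor <;> [linarith [hB2]; linarith [hA]]
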